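/- For every real \nu > 0 and every nonnegative integer j with j < \nu, and every u > 0: u^{\nu+j} K_{\nu-j}(u) = \sum_{i=0}^{j} (-2)^{j-i} C(j,i) * (\Gamma(\nu+1)/\Gamma(\nu+1-(j-i))) * u^{\nu+i} K_{\nu+i}(u), where K_\mu is the modified Bessel function of the third kind. -/

import Mathlib

open Finset

/-- The modified Bessel function of the third kind `K`, via its integral
representation. -/
noncomputable def besselK (nu u : ℝ) : ℝ :=
  ∫ t in Set.Ioi (0 : ℝ), Real.exp (-u * Real.cosh t) * Real.cosh (nu * t)

open Real Filter MeasureTheory Set Topology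


lemma cosh_ge_half_exp (t : ℝ) : exp t / 2 ≤ Real.cosh t := by
  rw [Real.cosh_eq]
  have := (Real.exp_pos (-t)).le
  linarith

lemma cosh_le_exp_abs (t : ℝ) : Real.cosh t ≤ exp |t| := by
  rw [Real.cosh_eq]
  have h1 : exp t ≤ exp |t| := Real.exp_le_exp.2 (le_abs_self t)
  have h2 : exp (-t) ≤ exp |t| := Real.exp_le_exp.2 (neg_le_abs t)
  linarith

lemma abs_sinh_le_exp_abs (t : ℝ) : |Real.sinh t| ≤ exp |t| := by
  rw [Real.abs_sinh]
  refine le_trans (Real.sinh_lt_cosh _).le ?_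
  simpa using cosh_le_exp_abs |t|

lemma key_tendsto (u c : ℝ) (hu : 0 < u) :
    Tendsto (fun t : ℝ => exp (c * t) * exp (-u * Real.cosh t)) atTop (𝓝 0) := by
  have h1 : Tendsto (fun t : ℝ => exp (c * t - u / 2 * exp t)) atTop (𝓝 0) := by
    have h2 : Tendsto (fun t : ℝ => exp t * (c * (t * exp (-t)) - u / 2)) atTop atBot := by
      have h3 : Tendsto (fun t : ℝ => t * exp (-t)) atTop (𝓝 0) := by
        simpa using Real.tendsto_pow_mul_exp_neg_atTop_nhds_zero 1
      have hg : Tendsto (fun t : ℝ => c * (t * exp (-t)) - u / 2) atTop (𝓝 (-(u / 2))) := by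
        have := (h3.const_mul c).sub_const (u / 2)
        simpa using this
      exact Tendsto.atTop_mul_neg (by linarith) Real.tendsto_exp_atTop hg
    have := Real.tendsto_exp_atBot.comp h2
    refine this.congr (fun t => ?_)
    simp only [Function.comp]
    congr 1
    have he : exp t * exp (-t) = 1 := by rw [← Real.exp_add]; simp
    linear_combination (c * t) * he
  refine squeeze_zero (fun t => by positivity) ?_ h1
  intro t
  rw [← Real.exp_add]
  apply Real.exp_le_exp.2
  have := cosh_ge_half_exp t
  nlinarith

lemma aux_integrable (u c : ℝ) (hu : 0 < u) :
    IntegrableOn (fun t : ℝ => exp (c * t) * exp (-u * Real.cosh t)) (Ioi 0) := by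
  refine integrable_of_isBigO_exp_neg one_pos (by fun_prop) ?_
  rw [Asymptotics.isBigO_iff]
  refine ⟨1, ?_⟩
  have := (key_tendsto u (c + 1) hu).eventually (eventually_le_nhds one_pos)
  filter_upwards [this] with t ht
  have h2 : exp (c * t) * exp (-u * Real.cosh t) ≤ exp (-t) := by
    have he : exp (c * t) = exp (-t) * exp ((c + 1) * t) := by
      rw [← Real.exp_add]; ring_nf
    rw [he, mul_assoc]
    calc exp (-t) * (exp ((c + 1) * t) * exp (-u * Real.cosh t)) ≤ exp (-t) * 1 :=
          mul_le_mul_of_nonneg_left ht (Real.exp_pos _).le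
      _ = exp (-t) := mul_one _
  have hpos : (0:ℝ) < exp (c * t) * exp (-u * Real.cosh t) := by positivity
  rw [Real.norm_eq_abs, Real.norm_eq_abs, abs_of_pos hpos, abs_of_pos (Real.exp_pos _),
    one_mul, neg_one_mul]
  exact h2

lemma integrable1 (nu u : ℝ) (hu : 0 < u) :
    IntegrableOn (fun t : ℝ => exp (-u * Real.cosh t) * Real.cosh (nu * t)) (Ioi 0) := by
  have hc : Continuous (fun t : ℝ => exp (-u * Real.cosh t) * Real.cosh (nu * t)) := by
    fun_prop
  refine Integrable.mono (aux_integrable u |nu| hu) hc.aestronglyMeasurable ?_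
  rw [ae_restrict_iff' measurableSet_Ioi]
  filter_upwards with t ht
  have ht' : (0:ℝ) < t := ht
  have hb : Real.cosh (nu * t) ≤ exp (|nu| * t) := by
    have := cosh_le_exp_abs (nu * t)
    rwa [abs_mul, abs_of_pos ht'] at this
  have hc := Real.cosh_pos (nu * t)
  rw [Real.norm_eq_abs, Real.norm_eq_abs, abs_mul, abs_mul,
    abs_of_pos (Real.exp_pos _), abs_of_pos (Real.exp_pos _), abs_of_pos hc]
  calc exp (-u * Real.cosh t) * Real.cosh (nu * t)
      ≤ exp (-u * Real.cosh t) * exp (|nu| * t) :=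
        mul_le_mul_of_nonneg_left hb (Real.exp_pos _).le
    _ = exp (|nu| * t) * exp (-u * Real.cosh t) := mul_comm _ _

lemma integrable2 (nu u : ℝ) (hu : 0 < u) :
    IntegrableOn (fun t : ℝ => exp (-u * Real.cosh t) * (Real.sinh t * Real.sinh (nu * t)))
      (Ioi 0) := by
  have hc : Continuous (fun t : ℝ => exp (-u * Real.cosh t) * (Real.sinh t * Real.sinh (nu * t))) := by
    fun_prop
  refine Integrable.mono (aux_integrable u (|nu| + 1) hu) hc.aestronglyMeasurable ?_
  rw [ae_restrict_iff' measurableSet_Ioi]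
  filter_upwards with t ht
  have ht' : (0:ℝ) < t := ht
  have hb1 : |Real.sinh t| ≤ exp t := by
    have := abs_sinh_le_exp_abs t
    rwa [abs_of_pos ht'] at this
  have hb2 : |Real.sinh (nu * t)| ≤ exp (|nu| * t) := by
    have := abs_sinh_le_exp_abs (nu * t)
    rwa [abs_mul, abs_of_pos ht'] at this
  rw [Real.norm_eq_abs, Real.norm_eq_abs,
    abs_of_nonneg (by positivity : (0:ℝ) ≤ exp ((|nu| + 1) * t) * exp (-u * Real.cosh t)),
    abs_mul, abs_mul, abs_of_pos (Real.exp_pos (-u * Real.cosh t))]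
  calc exp (-u * Real.cosh t) * (|Real.sinh t| * |Real.sinh (nu * t)|)
      ≤ exp (-u * Real.cosh t) * (exp t * exp (|nu| * t)) := by
        refine mul_le_mul_of_nonneg_left ?_ (Real.exp_pos _).le
        exact mul_le_mul hb1 hb2 (abs_nonneg _) (Real.exp_pos _).le
    _ = exp ((|nu| + 1) * t) * exp (-u * Real.cosh t) := by
        rw [← Real.exp_add]; ring_nf

lemma parts (nu u : ℝ) (hu : 0 < u) :
    u * ∫ t in Ioi (0:ℝ), exp (-u * Real.cosh t) * (Real.sinh t * Real.sinh (nu * t))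
      = nu * besselK nu u := by
  set F : ℝ → ℝ := fun t => exp (-u * Real.cosh t) * Real.sinh (nu * t) with hF
  set F' : ℝ → ℝ := fun t =>
    -u * (exp (-u * Real.cosh t) * (Real.sinh t * Real.sinh (nu * t)))
      + nu * (exp (-u * Real.cosh t) * Real.cosh (nu * t)) with hF'
  have hderiv : ∀ t ∈ Ici (0:ℝ), HasDerivAt F (F' t) t := by
    intro t _
    have h1 : HasDerivAt (fun t : ℝ => exp (-u * Real.cosh t))
        (-u * Real.sinh t * exp (-u * Real.cosh t)) t := by
      have := ((Real.hasDerivAt_cosh t).const_mul (-u)).exp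
      simpa [mul_comm] using this
    have h2 : HasDerivAt (fun t : ℝ => Real.sinh (nu * t)) (nu * Real.cosh (nu * t)) t := by
      have := (Real.hasDerivAt_sinh (nu * t)).comp t ((hasDerivAt_id t).const_mul nu)
      simpa [mul_comm, Function.comp_def] using this
    have := h1.mul h2
    convert this using 1
    · rfl
    · rfl
    · rfl
    simp only [hF']
    ring
  have hlim : Tendsto F atTop (𝓝 0) := by
    refine squeeze_zero_norm' ?_ (key_tendsto u |nu| hu)
    filter_upwards [eventually_ge_atTop (0:ℝ)] with t ht
    rw [Real.norm_eq_abs, hF]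
    simp only
    rw [abs_mul, abs_of_pos (Real.exp_pos _)]
    have hb : |Real.sinh (nu * t)| ≤ exp (|nu| * t) := by
      have := abs_sinh_le_exp_abs (nu * t)
      rwa [abs_mul, abs_of_nonneg ht] at this
    calc exp (-u * Real.cosh t) * |Real.sinh (nu * t)|
        ≤ exp (-u * Real.cosh t) * exp (|nu| * t) :=
          mul_le_mul_of_nonneg_left hb (Real.exp_pos _).le
      _ = exp (|nu| * t) * exp (-u * Real.cosh t) := mul_comm _ _
  have hint : IntegrableOn F' (Ioi 0) :=
    ((integrable2 nu u hu).const_mul (-u)).add ((integrable1 nu u hu).const_mul nu)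
  have key := integral_Ioi_of_hasDerivAt_of_tendsto' hderiv hint hlim
  have hF0 : F 0 = 0 := by simp [hF]
  rw [hF0, sub_zero] at key
  have split : ∫ t in Ioi (0:ℝ), F' t
      = -u * (∫ t in Ioi (0:ℝ), exp (-u * Real.cosh t) * (Real.sinh t * Real.sinh (nu * t)))
        + nu * ∫ t in Ioi (0:ℝ), exp (-u * Real.cosh t) * Real.cosh (nu * t) := by
    rw [hF']
    rw [MeasureTheory.integral_add (((integrable2 nu u hu).const_mul (-u)))
      ((integrable1 nu u hu).const_mul nu), MeasureTheory.integral_const_mul,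
      MeasureTheory.integral_const_mul]
  rw [split] at key
  unfold besselK
  linarith

lemma besselK_rec (nu u : ℝ) (hu : 0 < u) :
    besselK (nu + 1) u - besselK (nu - 1) u = 2 * nu / u * besselK nu u := by
  have h2 := parts nu u hu
  have e1 : besselK (nu + 1) u - besselK (nu - 1) u
      = ∫ t in Ioi (0:ℝ), 2 * (exp (-u * Real.cosh t) * (Real.sinh t * Real.sinh (nu * t))) := by
    unfold besselK
    rw [← MeasureTheory.integral_sub (integrable1 (nu+1) u hu) (integrable1 (nu-1) u hu)]
    refine MeasureTheory.setIntegral_congr_fun measurableSet_Ioi (fun t _ => ?_)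
    rw [show (nu+1)*t = nu*t + t by ring, show (nu-1)*t = nu*t - t by ring,
      Real.cosh_add, Real.cosh_sub]
    ring
  rw [e1, MeasureTheory.integral_const_mul]
  field_simp at h2 ⊢
  linarith


lemma coeff0 (nu : ℝ) (j : ℕ) (h : (j:ℝ) + 1 < nu) :
    (-2:ℝ)^(j+1-0) * (((j+1).choose 0 : ℕ) : ℝ) *
      (Real.Gamma (nu+1) / Real.Gamma (nu+1 - ((j+1-0 : ℕ) : ℝ)))
    = (-2*(nu - j)) * ((-2:ℝ)^(j-0) * ((j.choose 0 : ℕ) : ℝ) *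
      (Real.Gamma (nu+1) / Real.Gamma (nu+1 - ((j-0 : ℕ) : ℝ)))) := by
  have hnj : (0:ℝ) < nu - j := by linarith
  have hG : (0:ℝ) < Real.Gamma (nu - j) := Real.Gamma_pos_of_pos hnj
  have hG1 : (0:ℝ) < Real.Gamma (nu+1) := Real.Gamma_pos_of_pos (by linarith)
  simp only [Nat.sub_zero, Nat.choose_zero_right, Nat.cast_one]
  push_cast
  have g1 : Real.Gamma (nu + 1 - ((j:ℝ)+1)) = Real.Gamma (nu - j) := by congr 1; ring
  have g2 : Real.Gamma (nu + 1 - (j:ℝ)) = (nu - j) * Real.Gamma (nu - j) := by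
    rw [show nu + 1 - (j:ℝ) = (nu - j) + 1 by ring, Real.Gamma_add_one hnj.ne']
  rw [g1, g2]
  field_simp
  ring

lemma coeff_id (nu : ℝ) (j i : ℕ) (hij : i ≤ j) (h : (j:ℝ) + 1 < nu) :
    (-2:ℝ)^(j+1-(i+1)) * (((j+1).choose (i+1) : ℕ) : ℝ) *
      (Real.Gamma (nu+1) / Real.Gamma (nu+1 - ((j+1-(i+1) : ℕ) : ℝ)))
    = (-2:ℝ)^(j-i) * ((j.choose i : ℕ) : ℝ) *
      (Real.Gamma (nu+1+1) / Real.Gamma (nu+1+1 - ((j-i : ℕ) : ℝ)))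
      + (-2*(nu - j)) * ((-2:ℝ)^(j-(i+1)) * ((j.choose (i+1) : ℕ) : ℝ) *
        (Real.Gamma (nu+1) / Real.Gamma (nu+1 - ((j-(i+1) : ℕ) : ℝ)))) := by
  have hG1 : (0:ℝ) < Real.Gamma (nu+1) := Real.Gamma_pos_of_pos (by linarith)
  rcases eq_or_lt_of_le hij with rfl | hlt
  · simp only [Nat.add_sub_cancel, Nat.sub_self, Nat.choose_self, Nat.cast_one,
      Nat.cast_zero, sub_zero, pow_zero, one_mul,
      Nat.choose_eq_zero_of_lt (Nat.lt_succ_self i), Nat.cast_zero]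
    have hG2 : (0:ℝ) < Real.Gamma (nu+1+1) := Real.Gamma_pos_of_pos (by linarith)
    rw [div_self hG1.ne', div_self hG2.ne']
    ring
  · obtain ⟨k, rfl⟩ : ∃ k, j = i + 1 + k := ⟨j - (i+1), by omega⟩
    have e1 : i + 1 + k + 1 - (i + 1) = k + 1 := by omega
    have e2 : i + 1 + k - i = k + 1 := by omega
    have e3 : i + 1 + k - (i + 1) = k := by omega
    rw [e1, e2, e3]
    push_cast
    have hnk : (0:ℝ) < nu - k := by push_cast at h; linarith
    have hG : (0:ℝ) < Real.Gamma (nu - k) := Real.Gamma_pos_of_pos hnk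
    have g1 : Real.Gamma (nu + 1 - ((k:ℝ)+1)) = Real.Gamma (nu - k) := by
      congr 1; ring
    have g2 : Real.Gamma (nu + 1 + 1 - ((k:ℝ)+1)) = (nu - k) * Real.Gamma (nu - k) := by
      rw [show nu + 1 + 1 - ((k:ℝ)+1) = (nu - k) + 1 by ring, Real.Gamma_add_one hnk.ne']
    have g3 : Real.Gamma (nu + 1 - (k:ℝ)) = (nu - k) * Real.Gamma (nu - k) := by
      rw [show nu + 1 - (k:ℝ) = (nu - k) + 1 by ring, Real.Gamma_add_one hnk.ne']
    have g4 : Real.Gamma (nu + 1 + 1) = (nu + 1) * Real.Gamma (nu + 1) := by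
      rw [show nu + 1 + 1 = (nu + 1) + 1 by ring, Real.Gamma_add_one (by linarith : nu + 1 ≠ 0)]
    rw [g1, g2, g3, g4]
    have hch : ((i + 1 + k).choose (i+1) : ℝ) * ((i:ℝ)+1) =
        ((i + 1 + k).choose i : ℝ) * ((k:ℝ)+1) := by
      have := Nat.choose_succ_right_eq (i + 1 + k) i
      rw [e2] at this
      exact_mod_cast this
    have hp : (((i + 1 + k + 1).choose (i+1)) : ℝ) =
        ((i + 1 + k).choose i : ℝ) + ((i + 1 + k).choose (i+1) : ℝ) := by
      exact_mod_cast (Nat.choose_succ_succ (i + 1 + k) i)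
    rw [hp]
    field_simp
    linear_combination (-2 * (-2:ℝ)^k) * hch

lemma main_ind (u : ℝ) (hu : 0 < u) (j : ℕ) : ∀ (nu : ℝ), (j : ℝ) < nu →
    u ^ (nu + j) * besselK (nu - j) u =
      ∑ i ∈ Finset.range (j + 1),
        (-2 : ℝ) ^ (j - i) * (j.choose i) *
          (Real.Gamma (nu + 1) / Real.Gamma (nu + 1 - (j - i : ℕ))) *
          u ^ (nu + i) * besselK (nu + i) u := by
  induction j with
  | zero =>
    intro nu hnu
    have hG1 : (0:ℝ) < Real.Gamma (nu+1) := Real.Gamma_pos_of_pos (by linarith)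
    rw [Finset.sum_range_one]
    simp only [Nat.sub_zero, Nat.sub_self, Nat.choose_self, Nat.cast_one, Nat.cast_zero,
      pow_zero, one_mul, sub_zero, add_zero]
    rw [div_self hG1.ne', one_mul]
  | succ j ih =>
    intro nu hj
    have hj' : ((j:ℝ)) + 1 < nu := by push_cast at hj; linarith
    have h1 := ih nu (by linarith)
    have h2 := ih (nu + 1) (by linarith)
    have hK : besselK (nu - ((j:ℝ)+1)) u
        = besselK ((nu+1) - (j:ℝ)) u - 2*(nu-(j:ℝ))/u * besselK (nu - (j:ℝ)) u := by
      have hrec := besselK_rec (nu - (j:ℝ)) u hu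
      rw [show nu - ((j:ℝ)+1) = (nu - (j:ℝ)) - 1 by ring,
        show (nu+1) - (j:ℝ) = (nu - (j:ℝ)) + 1 by ring]
      linarith
    have hpow2 : u ^ ((nu+1) + (j:ℝ)) = u ^ (nu + (j:ℝ)) * u := by
      rw [show (nu+1) + (j:ℝ) = (nu + (j:ℝ)) + 1 by ring, Real.rpow_add_one hu.ne']
    calc u ^ (nu + ((j+1:ℕ):ℝ)) * besselK (nu - ((j+1:ℕ):ℝ)) u
        = u ^ ((nu+1) + (j:ℝ)) * besselK ((nu+1) - (j:ℝ)) u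
          + (-2*(nu - (j:ℝ))) * (u ^ (nu + (j:ℝ)) * besselK (nu - (j:ℝ)) u) := by
          push_cast
          rw [hK, show nu + ((j:ℝ)+1) = (nu+1) + (j:ℝ) by ring, hpow2]
          field_simp
          ring
      _ = (∑ i ∈ Finset.range (j + 1),
            (-2 : ℝ) ^ (j - i) * (j.choose i) *
              (Real.Gamma (nu + 1 + 1) / Real.Gamma (nu + 1 + 1 - (j - i : ℕ))) *
              u ^ (nu + 1 + i) * besselK (nu + 1 + i) u)
          + ∑ i ∈ Finset.range (j + 1), (-2*(nu - (j:ℝ))) *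
            ((-2 : ℝ) ^ (j - i) * (j.choose i) *
              (Real.Gamma (nu + 1) / Real.Gamma (nu + 1 - (j - i : ℕ))) *
              u ^ (nu + i) * besselK (nu + i) u) := by
          rw [h1, h2, Finset.mul_sum]
      _ = ∑ i ∈ Finset.range (j + 1 + 1),
            (-2 : ℝ) ^ (j + 1 - i) * ((j+1).choose i) *
              (Real.Gamma (nu + 1) / Real.Gamma (nu + 1 - (j + 1 - i : ℕ))) *
              u ^ (nu + i) * besselK (nu + i) u := by
          set F : ℕ → ℝ := fun i => (-2 : ℝ) ^ (j + 1 - i) * (((j+1).choose i : ℕ) : ℝ) *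
              (Real.Gamma (nu + 1) / Real.Gamma (nu + 1 - ((j + 1 - i : ℕ) : ℝ))) *
              u ^ (nu + (i:ℝ)) * besselK (nu + (i:ℝ)) u with hF
          set G : ℕ → ℝ := fun i => (-2 : ℝ) ^ (j - i) * ((j.choose i : ℕ) : ℝ) *
              (Real.Gamma (nu + 1 + 1) / Real.Gamma (nu + 1 + 1 - ((j - i : ℕ) : ℝ))) *
              u ^ (nu + 1 + (i:ℝ)) * besselK (nu + 1 + (i:ℝ)) u with hG
          set H : ℕ → ℝ := fun i => (-2*(nu - (j:ℝ))) *
              ((-2 : ℝ) ^ (j - i) * ((j.choose i : ℕ) : ℝ) *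
              (Real.Gamma (nu + 1) / Real.Gamma (nu + 1 - ((j - i : ℕ) : ℝ))) *
              u ^ (nu + (i:ℝ)) * besselK (nu + (i:ℝ)) u) with hH
          rw [Finset.sum_range_succ' F (j+1)]
          have hHsum : ∑ i ∈ Finset.range (j + 1), H i
              = (∑ i ∈ Finset.range (j + 1), H (i+1)) + H 0 := by
            have htop : H (j+1) = 0 := by
              simp [hH, Nat.choose_eq_zero_of_lt (Nat.lt_succ_self j)]
            have e1 := Finset.sum_range_succ H (j+1)
            have e2 := Finset.sum_range_succ' H (j+1)
            rw [htop, add_zero] at e1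
            rw [← e1, e2]
          rw [hHsum]
          have hFH0 : F 0 = H 0 := by
            simp only [hF, hH]
            have hc := coeff0 nu j hj'
            linear_combination (u ^ (nu + ((0:ℕ):ℝ)) * besselK (nu + ((0:ℕ):ℝ)) u) * hc
          have hterm : ∀ i ∈ Finset.range (j + 1), F (i+1) = G i + H (i+1) := by
            intro i hi
            simp only [hF, hG, hH]
            have hb : besselK (nu + ((i+1 : ℕ):ℝ)) u = besselK (nu + 1 + (i:ℝ)) u := by
              congr 1; push_cast; ring
            have hup : u ^ (nu + ((i+1 : ℕ):ℝ)) = u ^ (nu + 1 + (i:ℝ)) := by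
              congr 1; push_cast; ring
            rw [hb, hup]
            have hc := coeff_id nu j i (Nat.lt_succ_iff.mp (Finset.mem_range.mp hi)) hj'
            linear_combination (u ^ (nu + 1 + (i:ℝ)) * besselK (nu + 1 + (i:ℝ)) u) * hc
          rw [Finset.sum_congr rfl hterm, Finset.sum_add_distrib, hFH0]
          ring

theorem besselK_recursion (nu : ℝ) (hnu : 0 < nu) (j : ℕ) (hj : (j : ℝ) < nu)
    (u : ℝ) (hu : 0 < u) :
    u ^ (nu + j) * besselK (nu - j) u =
      ∑ i ∈ Finset.range (j + 1),
        (-2 : ℝ) ^ (j - i) * (j.choose i) *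
          (Real.Gamma (nu + 1) / Real.Gamma (nu + 1 - (j - i : ℕ))) *
          u ^ (nu + i) * besselK (nu + i) u :=
  main_ind u hu j nu hj
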